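/- (Generalized Regge symmetry, type II.) Assume (r1,r2,r3,r4,i,j,N) is admissible and r1 + r2 = r3 + r4, and set ρ′ = (r2 + r4 + i + j)/2 and ρ″ = (r1 + r3 + i + j)/2. Then the tuples (r1, ρ′−r4, r3, ρ′−r2, ρ′−j, ρ′−i, N) and (ρ″−r3, r2, ρ″−r1, r4, ρ″−j, ρ″−i, N) are admissible and satisfy the same fusion relation (first entry plus second entry equals third plus fourth), and F_2^N(r1, r2, i; r3, r4, j) = F_2^N(r1, ρ′−r4, ρ′−j; r3, ρ′−r2, ρ′−i) = F_2^N(ρ″−r3, r2, ρ″−j; ρ″−r1, r4, ρ″−i). For N = 2 these reduce to the classical Regge symmetries of the U_q(sl_2) 6-j symbol; for N > 2 they are new non-tetrahedral symmetries of multiplicity-free U_q(sl_N) 6-j symbols. -/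
import Mathlib


open Finset

/-- The quantum integer `[n] = (tⁿ − t⁻ⁿ)/(t − t⁻¹)`. -/
noncomputable def qint (t : ℝ) (n : ℤ) : ℝ := (t ^ n - t ^ (-n)) / (t - t⁻¹)

/-- The quantum factorial `[n]! = [1][2]⋯[n]`, with `[0]! = 1`
(and value `1` for negative arguments, which never occur below). -/
noncomputable def qfact (t : ℝ) (n : ℤ) : ℝ :=
  ∏ k ∈ Finset.range n.toNat, qint t ((k : ℤ) + 1)

/-- The q-Pochhammer symbol `(x; q)_n = ∏_{s=0}^{n−1} (1 − x qˢ)`. -/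
noncomputable def qpoch (x q : ℝ) (n : ℕ) : ℝ :=
  ∏ s ∈ Finset.range n, (1 - x * q ^ s)

/-- Admissibility of the tuple `(r₁,r₂,r₃,r₄,i,j,N)`. -/
def Admissible (r₁ r₂ r₃ r₄ i j N : ℤ) : Prop :=
  0 ≤ r₁ ∧ 0 ≤ r₂ ∧ 0 ≤ r₃ ∧ 0 ≤ r₄ ∧ 0 ≤ i ∧ 0 ≤ j ∧ 2 ≤ N ∧
  2 ∣ (r₁ + r₂ + i) ∧ 2 ∣ (r₃ + r₄ + i) ∧ 2 ∣ (r₁ + r₄ + j) ∧ 2 ∣ (r₂ + r₃ + j) ∧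
  max |r₁ - r₂| |r₃ - r₄| ≤ i ∧ i ≤ min (r₁ + r₂) (r₃ + r₄) ∧
  max |r₂ - r₃| |r₁ - r₄| ≤ j ∧ j ≤ min (r₂ + r₃) (r₁ + r₄)

/-- `ρ = (r₁+r₂+r₃+r₄)/2`. -/
def rho (r₁ r₂ r₃ r₄ : ℤ) : ℤ := (r₁ + r₂ + r₃ + r₄) / 2

/-- `m_max = (1/2)·min(r₁+r₂−i, r₃+r₄−i, r₁+r₄−j, r₂+r₃−j)`. -/
def mMax (r₁ r₂ r₃ r₄ i j : ℤ) : ℤ :=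
  (min (min (r₁ + r₂ - i) (r₃ + r₄ - i)) (min (r₁ + r₄ - j) (r₂ + r₃ - j))) / 2

/-- `m_min = (1/2)·max(0, r₁+r₃−i−j, r₂+r₄−i−j)`. -/
def mMin (r₁ r₂ r₃ r₄ i j : ℤ) : ℤ :=
  (max 0 (max (r₁ + r₃ - i - j) (r₂ + r₄ - i - j))) / 2

/-- `θ_N(a,b,c)`. -/
noncomputable def theta (t : ℝ) (N a b c : ℤ) : ℝ :=
  Real.sqrt (qfact t ((a + b - c) / 2) * qfact t ((a - b + c) / 2) *
    qfact t ((-a + b + c) / 2) / qfact t ((a + b + c) / 2 + N - 1))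

/-- `K′ = θ_N(r₁,r₂,i)·θ_N(r₃,r₄,i)·θ_N(r₁,r₄,j)·θ_N(r₂,r₃,j)·[N−1]!·[N−2]!`. -/
noncomputable def Kprime (t : ℝ) (N r₁ r₂ r₃ r₄ i j : ℤ) : ℝ :=
  theta t N r₁ r₂ i * theta t N r₃ r₄ i * theta t N r₁ r₄ j * theta t N r₂ r₃ j *
    qfact t (N - 1) * qfact t (N - 2)

/-- The multiplicity-free 6-j expression `F_T^N(r₁,r₂,i; r₃,r₄,j)` of type `T ∈ {1,2}`. -/
noncomputable def F (t : ℝ) (T : ℕ) (N r₁ r₂ i r₃ r₄ j : ℤ) : ℝ :=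
  Kprime t N r₁ r₂ r₃ r₄ i j *
    ∑ m ∈ Finset.Icc (mMin r₁ r₂ r₃ r₄ i j) (mMax r₁ r₂ r₃ r₄ i j),
      (-1 : ℝ) ^ (rho r₁ r₂ r₃ r₄ - m) * qfact t (rho r₁ r₂ r₃ r₄ + N - 1 - m) /
        (qfact t m * qfact t ((r₃ + r₄ - i) / 2 - m) * qfact t ((r₂ + r₃ - j) / 2 - m) *
          qfact t ((r₁ + r₄ - j) / 2 - m) * qfact t ((i + j - r₂ - r₄) / 2 + m) *
          qfact t ((r₁ + r₂ - i) / 2 + (N - 2) * (if T = 2 then 1 else 0) - m) *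
          qfact t ((i + j - r₁ - r₃) / 2 + (N - 2) * (if T = 1 then 1 else 0) + m))

/-- The prefactor `K_T` (for the case `m_min = 0`). -/
noncomputable def Kfac (t : ℝ) (T : ℕ) (N r₁ r₂ i r₃ r₄ j : ℤ) : ℝ :=
  Kprime t N r₁ r₂ r₃ r₄ i j * qfact t (rho r₁ r₂ r₃ r₄ + N - 1) /
    (qfact t ((r₃ + r₄ - i) / 2) *
      qfact t ((r₁ + r₂ - i) / 2 + (N - 2) * (if T = 2 then 1 else 0)) *
      qfact t ((r₂ + r₃ - j) / 2) * qfact t ((r₁ + r₄ - j) / 2) *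
      qfact t ((i + j - r₂ - r₄) / 2) *
      qfact t ((i + j - r₁ - r₃) / 2 + (N - 2) * (if T = 1 then 1 else 0)))

lemma qint_pos {t : ℝ} (ht : 0 < t) (ht1 : t ≠ 1) {n : ℤ} (hn : 0 < n) : 0 < qint t n := by
  unfold qint
  rcases lt_or_gt_of_ne ht1 with h | h
  · apply div_pos_of_neg_of_neg
    · have := zpow_lt_zpow_right_of_lt_one₀ ht h (show -n < n by omega)
      linarith
    · have : 1 < t⁻¹ := (one_lt_inv₀ ht).mpr h
      linarith
  · apply div_pos
    · have := zpow_lt_zpow_right₀ h (show -n < n by omega)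
      linarith
    · have : t⁻¹ < 1 := inv_lt_one_of_one_lt₀ h
      linarith

lemma qfact_pos {t : ℝ} (ht : 0 < t) (ht1 : t ≠ 1) (n : ℤ) : 0 < qfact t n :=
  Finset.prod_pos fun k _ => qint_pos ht ht1 (by omega)

lemma Kprime_sqrt {t : ℝ} (ht : 0 < t) (ht1 : t ≠ 1) (N r₁ r₂ r₃ r₄ i j : ℤ) :
    Kprime t N r₁ r₂ r₃ r₄ i j = Real.sqrt (
      (qfact t ((r₁ + r₂ - i) / 2) * qfact t ((r₁ - r₂ + i) / 2) *
        qfact t ((-r₁ + r₂ + i) / 2) / qfact t ((r₁ + r₂ + i) / 2 + N - 1)) *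
      (qfact t ((r₃ + r₄ - i) / 2) * qfact t ((r₃ - r₄ + i) / 2) *
        qfact t ((-r₃ + r₄ + i) / 2) / qfact t ((r₃ + r₄ + i) / 2 + N - 1)) *
      (qfact t ((r₁ + r₄ - j) / 2) * qfact t ((r₁ - r₄ + j) / 2) *
        qfact t ((-r₁ + r₄ + j) / 2) / qfact t ((r₁ + r₄ + j) / 2 + N - 1)) *
      (qfact t ((r₂ + r₃ - j) / 2) * qfact t ((r₂ - r₃ + j) / 2) *
        qfact t ((-r₂ + r₃ + j) / 2) / qfact t ((r₂ + r₃ + j) / 2 + N - 1))) *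
      qfact t (N - 1) * qfact t (N - 2) := by
  have hq := qfact_pos ht ht1
  have hW : ∀ x y z w : ℤ, (0:ℝ) ≤ qfact t x * qfact t y * qfact t z / qfact t w :=
    fun x y z w => le_of_lt (div_pos (mul_pos (mul_pos (hq x) (hq y)) (hq z)) (hq w))
  unfold Kprime theta
  rw [← Real.sqrt_mul (hW _ _ _ _), ← Real.sqrt_mul (mul_nonneg (hW _ _ _ _) (hW _ _ _ _)),
    ← Real.sqrt_mul (mul_nonneg (mul_nonneg (hW _ _ _ _) (hW _ _ _ _)) (hW _ _ _ _))]

set_option maxHeartbeats 1000000 in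
lemma regge1 (t : ℝ) (ht : 0 < t) (ht1 : t ≠ 1) (r₁ r₂ r₃ r₄ i j N k : ℤ)
    (p1 : 2 ∣ r₁ + r₂ + i) (p2 : 2 ∣ r₃ + r₄ + i) (p3 : 2 ∣ r₁ + r₄ + j)
    (p4 : 2 ∣ r₂ + r₃ + j) (hfus : r₁ + r₂ = r₃ + r₄) (hk : r₂ + r₄ + i + j = 2 * k) :
    F t 2 N r₁ r₂ i r₃ r₄ j = F t 2 N r₁ (k - r₄) (k - j) r₃ (k - r₂) (k - i) := by
  unfold F
  simp only [show ((2:ℕ) = 2) = True by simp, show ((2:ℕ) = 1) = False by simp,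
    if_true, if_false, mul_one, mul_zero, add_zero]
  rw [show mMin r₁ (k - r₄) r₃ (k - r₂) (k - j) (k - i)
        = mMin r₁ r₂ r₃ r₄ i j + (k - r₂ - r₄) by simp only [mMin]; omega,
    show mMax r₁ (k - r₄) r₃ (k - r₂) (k - j) (k - i)
        = mMax r₁ r₂ r₃ r₄ i j + (k - r₂ - r₄) by simp only [mMax]; omega,
    ← Finset.map_add_right_Icc, Finset.sum_map]
  simp only [addRightEmbedding_apply]
  congr 1
  · rw [Kprime_sqrt ht ht1 N r₁ r₂ r₃ r₄ i j,
      Kprime_sqrt ht ht1 N r₁ (k - r₄) r₃ (k - r₂) (k - j) (k - i),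
      show (r₁ + (k - r₄) - (k - j)) / 2 = (r₁ - r₄ + j) / 2 by omega,
      show (r₁ - (k - r₄) + (k - j)) / 2 = (r₁ + r₄ - j) / 2 by omega,
      show (-r₁ + (k - r₄) + (k - j)) / 2 = (-r₁ + r₂ + i) / 2 by omega,
      show (r₁ + (k - r₄) + (k - j)) / 2 + N - 1 = (r₁ + r₂ + i) / 2 + N - 1 by omega,
      show (r₃ + (k - r₂) - (k - j)) / 2 = (-r₂ + r₃ + j) / 2 by omega,
      show (r₃ - (k - r₂) + (k - j)) / 2 = (r₂ + r₃ - j) / 2 by omega,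
      show (-r₃ + (k - r₂) + (k - j)) / 2 = (-r₃ + r₄ + i) / 2 by omega,
      show (r₃ + (k - r₂) + (k - j)) / 2 + N - 1 = (r₃ + r₄ + i) / 2 + N - 1 by omega,
      show (r₁ + (k - r₂) - (k - i)) / 2 = (r₁ - r₂ + i) / 2 by omega,
      show (r₁ - (k - r₂) + (k - i)) / 2 = (r₁ + r₂ - i) / 2 by omega,
      show (-r₁ + (k - r₂) + (k - i)) / 2 = (-r₁ + r₄ + j) / 2 by omega,
      show (r₁ + (k - r₂) + (k - i)) / 2 + N - 1 = (r₁ + r₄ + j) / 2 + N - 1 by omega,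
      show (k - r₄ + r₃ - (k - i)) / 2 = (r₃ - r₄ + i) / 2 by omega,
      show (k - r₄ - r₃ + (k - i)) / 2 = (r₂ - r₃ + j) / 2 by omega,
      show (-(k - r₄) + r₃ + (k - i)) / 2 = (r₃ + r₄ - i) / 2 by omega,
      show (k - r₄ + r₃ + (k - i)) / 2 + N - 1 = (r₂ + r₃ + j) / 2 + N - 1 by omega]
    congr 2
    exact congrArg Real.sqrt (by ring)
  · refine Finset.sum_congr rfl fun m hm => ?_
    rw [show rho r₁ (k - r₄) r₃ (k - r₂) - (m + (k - r₂ - r₄)) = rho r₁ r₂ r₃ r₄ - m by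
        simp only [rho]; omega,
      show rho r₁ (k - r₄) r₃ (k - r₂) + N - 1 - (m + (k - r₂ - r₄))
          = rho r₁ r₂ r₃ r₄ + N - 1 - m by simp only [rho]; omega,
      show (r₃ + (k - r₂) - (k - j)) / 2 - (m + (k - r₂ - r₄)) = (r₃ + r₄ - i) / 2 - m by omega,
      show (k - r₄ + r₃ - (k - i)) / 2 - (m + (k - r₂ - r₄)) = (r₂ + r₃ - j) / 2 - m by omega,
      show (r₁ + (k - r₂) - (k - i)) / 2 - (m + (k - r₂ - r₄)) = (r₁ + r₄ - j) / 2 - m by omega,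
      show (k - j + (k - i) - (k - r₄) - (k - r₂)) / 2 + (m + (k - r₂ - r₄)) = m by omega,
      show (r₁ + (k - r₄) - (k - j)) / 2 + (N - 2) - (m + (k - r₂ - r₄))
          = (r₁ + r₂ - i) / 2 + (N - 2) - m by omega,
      show (k - j + (k - i) - r₁ - r₃) / 2 + (m + (k - r₂ - r₄)) = (i + j - r₁ - r₃) / 2 + m by
        omega,
      show m + (k - r₂ - r₄) = (i + j - r₂ - r₄) / 2 + m by omega]
    ring

set_option maxHeartbeats 1000000 in
lemma regge2 (t : ℝ) (ht : 0 < t) (ht1 : t ≠ 1) (r₁ r₂ r₃ r₄ i j N l : ℤ)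
    (p1 : 2 ∣ r₁ + r₂ + i) (p2 : 2 ∣ r₃ + r₄ + i) (p3 : 2 ∣ r₁ + r₄ + j)
    (p4 : 2 ∣ r₂ + r₃ + j) (hfus : r₁ + r₂ = r₃ + r₄) (hl : r₁ + r₃ + i + j = 2 * l) :
    F t 2 N r₁ r₂ i r₃ r₄ j = F t 2 N (l - r₃) r₂ (l - j) (l - r₁) r₄ (l - i) := by
  unfold F
  simp only [show ((2:ℕ) = 2) = True by simp, show ((2:ℕ) = 1) = False by simp,
    if_true, if_false, mul_one, mul_zero, add_zero]
  rw [show mMin (l - r₃) r₂ (l - r₁) r₄ (l - j) (l - i)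
        = mMin r₁ r₂ r₃ r₄ i j + (l - r₁ - r₃) by simp only [mMin]; omega,
    show mMax (l - r₃) r₂ (l - r₁) r₄ (l - j) (l - i)
        = mMax r₁ r₂ r₃ r₄ i j + (l - r₁ - r₃) by simp only [mMax]; omega,
    ← Finset.map_add_right_Icc, Finset.sum_map]
  simp only [addRightEmbedding_apply]
  congr 1
  · rw [Kprime_sqrt ht ht1 N r₁ r₂ r₃ r₄ i j,
      Kprime_sqrt ht ht1 N (l - r₃) r₂ (l - r₁) r₄ (l - j) (l - i),
      show (l - r₃ + r₂ - (l - j)) / 2 = (r₂ - r₃ + j) / 2 by omega,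
      show (l - r₃ - r₂ + (l - j)) / 2 = (r₁ - r₂ + i) / 2 by omega,
      show (-(l - r₃) + r₂ + (l - j)) / 2 = (r₂ + r₃ - j) / 2 by omega,
      show (l - r₃ + r₂ + (l - j)) / 2 + N - 1 = (r₁ + r₂ + i) / 2 + N - 1 by omega,
      show (l - r₁ + r₄ - (l - j)) / 2 = (-r₁ + r₄ + j) / 2 by omega,
      show (l - r₁ - r₄ + (l - j)) / 2 = (r₃ - r₄ + i) / 2 by omega,
      show (-(l - r₁) + r₄ + (l - j)) / 2 = (r₁ + r₄ - j) / 2 by omega,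
      show (l - r₁ + r₄ + (l - j)) / 2 + N - 1 = (r₃ + r₄ + i) / 2 + N - 1 by omega,
      show (l - r₃ + r₄ - (l - i)) / 2 = (-r₃ + r₄ + i) / 2 by omega,
      show (l - r₃ - r₄ + (l - i)) / 2 = (r₁ - r₄ + j) / 2 by omega,
      show (-(l - r₃) + r₄ + (l - i)) / 2 = (r₃ + r₄ - i) / 2 by omega,
      show (l - r₃ + r₄ + (l - i)) / 2 + N - 1 = (r₁ + r₄ + j) / 2 + N - 1 by omega,
      show (r₂ + (l - r₁) - (l - i)) / 2 = (-r₁ + r₂ + i) / 2 by omega,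
      show (r₂ - (l - r₁) + (l - i)) / 2 = (r₁ + r₂ - i) / 2 by omega,
      show (-r₂ + (l - r₁) + (l - i)) / 2 = (-r₂ + r₃ + j) / 2 by omega,
      show (r₂ + (l - r₁) + (l - i)) / 2 + N - 1 = (r₂ + r₃ + j) / 2 + N - 1 by omega]
    congr 2
    exact congrArg Real.sqrt (by ring)
  · refine Finset.sum_congr rfl fun m hm => ?_
    rw [show rho (l - r₃) r₂ (l - r₁) r₄ - (m + (l - r₁ - r₃)) = rho r₁ r₂ r₃ r₄ - m by
        simp only [rho]; omega,
      show rho (l - r₃) r₂ (l - r₁) r₄ + N - 1 - (m + (l - r₁ - r₃))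
          = rho r₁ r₂ r₃ r₄ + N - 1 - m by simp only [rho]; omega,
      show (l - r₁ + r₄ - (l - j)) / 2 - (m + (l - r₁ - r₃)) = (r₃ + r₄ - i) / 2 - m by omega,
      show (r₂ + (l - r₁) - (l - i)) / 2 - (m + (l - r₁ - r₃)) = (r₂ + r₃ - j) / 2 - m by omega,
      show (l - r₃ + r₄ - (l - i)) / 2 - (m + (l - r₁ - r₃)) = (r₁ + r₄ - j) / 2 - m by omega,
      show (l - j + (l - i) - r₂ - r₄) / 2 + (m + (l - r₁ - r₃)) = (i + j - r₂ - r₄) / 2 + m by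
        omega,
      show (l - r₃ + r₂ - (l - j)) / 2 + (N - 2) - (m + (l - r₁ - r₃))
          = (r₁ + r₂ - i) / 2 + (N - 2) - m by omega,
      show (l - j + (l - i) - (l - r₃) - (l - r₁)) / 2 + (m + (l - r₁ - r₃)) = m by omega,
      show m + (l - r₁ - r₃) = (i + j - r₁ - r₃) / 2 + m by omega]
    ring

set_option maxHeartbeats 1000000 in
/-- generalized Regge symmetry, type II: with `ρ′ = (r₂+r₄+i+j)/2` and
`ρ″ = (r₁+r₃+i+j)/2`, the two Regge-transformed tuples are admissible, satisfy the type II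
fusion relation (first plus second equals third plus fourth), and give the same value of
`F_2^N`. -/
theorem stmt10 (t : ℝ) (ht : 0 < t) (ht1 : t ≠ 1) (r₁ r₂ r₃ r₄ i j N : ℤ)
    (hadm : Admissible r₁ r₂ r₃ r₄ i j N) (hfus : r₁ + r₂ = r₃ + r₄) :
    Admissible r₁ ((r₂ + r₄ + i + j) / 2 - r₄) r₃ ((r₂ + r₄ + i + j) / 2 - r₂)
      ((r₂ + r₄ + i + j) / 2 - j) ((r₂ + r₄ + i + j) / 2 - i) N ∧
    r₁ + ((r₂ + r₄ + i + j) / 2 - r₄) = r₃ + ((r₂ + r₄ + i + j) / 2 - r₂) ∧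
    Admissible ((r₁ + r₃ + i + j) / 2 - r₃) r₂ ((r₁ + r₃ + i + j) / 2 - r₁) r₄
      ((r₁ + r₃ + i + j) / 2 - j) ((r₁ + r₃ + i + j) / 2 - i) N ∧
    ((r₁ + r₃ + i + j) / 2 - r₃) + r₂ = ((r₁ + r₃ + i + j) / 2 - r₁) + r₄ ∧
    F t 2 N r₁ r₂ i r₃ r₄ j =
      F t 2 N r₁ ((r₂ + r₄ + i + j) / 2 - r₄) ((r₂ + r₄ + i + j) / 2 - j)
        r₃ ((r₂ + r₄ + i + j) / 2 - r₂) ((r₂ + r₄ + i + j) / 2 - i) ∧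
    F t 2 N r₁ r₂ i r₃ r₄ j =
      F t 2 N ((r₁ + r₃ + i + j) / 2 - r₃) r₂ ((r₁ + r₃ + i + j) / 2 - j)
        ((r₁ + r₃ + i + j) / 2 - r₁) r₄ ((r₁ + r₃ + i + j) / 2 - i) := by
  obtain ⟨h1, h2, h3, h4, h5, h6, hN, p1, p2, p3, p4, hi1, hi2, hj1, hj2⟩ := hadm
  simp only [max_le_iff, le_min_iff, abs_le] at hi1 hi2 hj1 hj2
  refine ⟨?_, by omega, ?_, by omega, ?_, ?_⟩
  · unfold Admissible
    simp only [max_le_iff, le_min_iff, abs_le]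
    omega
  · unfold Admissible
    simp only [max_le_iff, le_min_iff, abs_le]
    omega
  · exact regge1 t ht ht1 r₁ r₂ r₃ r₄ i j N ((r₂ + r₄ + i + j) / 2) p1 p2 p3 p4 hfus
      (by omega)
  · exact regge2 t ht ht1 r₁ r₂ r₃ r₄ i j N ((r₁ + r₃ + i + j) / 2) p1 p2 p3 p4 hfus
      (by omega)
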